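/- Assume f is curved and let τ' > 0. Fix a nonempty subset J ⊆ I and signs (ε_j)_{j∈J} ∈ {−1,+1}^J, and for each τ > 0 let u^c(τ) = (τ/2) Σ_{j∈J} ε_j ψ_j ∈ ∂C_τ(0). Then the set A(τ) = p(SSAT_τ({u^c(τ)}, (0, τ'])) − u^c(τ) does not depend on τ, where SSAT_τ is defined relative to the cube C_τ(0) of half-width τ/2 and p is the projection Σ_{i∈I} α_i ψ_i ↦ Σ_{j∈J} α_j ψ_j onto Span(ψ_j : j ∈ J). -/

import Mathlib

open MeasureTheory Filter Set
open scoped Classical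

noncomputable section

/-- The ambient space `ℝ^N` with the Euclidean structure. -/
abbrev Euc (N : ℕ) := EuclideanSpace ℝ (Fin N)

variable {N : ℕ}

/-- The cell `C((k_i))` : points whose coordinates in the basis `ψ` satisfy
`τ(k_i - 1/2) ≤ u_i ≤ τ(k_i + 1/2)`. -/
def cube (ψ : Module.Basis (Fin N) ℝ (Euc N)) (τ : ℝ) (k : Fin N → ℤ) : Set (Euc N) :=
  {u | ∀ i, τ * ((k i : ℝ) - 1/2) ≤ ψ.repr u i ∧ ψ.repr u i ≤ τ * ((k i : ℝ) + 1/2)}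

/-- The central cell `C(0)`. -/
def cube0 (ψ : Module.Basis (Fin N) ℝ (Euc N)) (τ : ℝ) : Set (Euc N) := cube ψ τ 0

/-- The set of active (saturated) coordinates `J(u)` for `u ∈ C(0)`. -/
def Jset (ψ : Module.Basis (Fin N) ℝ (Euc N)) (τ : ℝ) (u : Euc N) : Set (Fin N) :=
  {i | ψ.repr u i = τ / 2 ∨ ψ.repr u i = -(τ / 2)}

/-- `sol` is the solution map of the problems `(P)(u)` : `sol u` minimizes `f(v - u)` over
`C(0)`.  (Under the hypotheses on `f` the minimizer is unique.) -/
def IsSol (ψ : Module.Basis (Fin N) ℝ (Euc N)) (τ : ℝ) (f : Euc N → ℝ) (sol : Euc N → Euc N) : Prop :=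
  ∀ u, sol u ∈ cube0 ψ τ ∧ IsMinOn (fun v => f (v - u)) (cube0 ψ τ) (sol u)

/-- `SSAT(C, A)` : the set of data `u` whose solution `sol u` lies in `C` and with
`f_d(u - sol u) ∈ A`. -/
def SSAT (sol : Euc N → Euc N) (fd : Euc N → ℝ) (C : Set (Euc N)) (A : Set ℝ) : Set (Euc N) :=
  {u | sol u ∈ C ∧ fd (u - sol u) ∈ A}

/-- `f` is a norm. -/
structure IsNormLike (f : Euc N → ℝ) : Prop where
  add_le : ∀ x y, f (x + y) ≤ f x + f y
  smul_eq : ∀ (c : ℝ) (x), f (c • x) = |c| * f x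
  eq_zero_iff : ∀ x, f x = 0 ↔ x = 0

/-- `f` is a norm, continuously differentiable away from `0`, with strictly convex
level sets. -/
structure GoodNorm (f : Euc N → ℝ) : Prop where
  add_le : ∀ x y, f (x + y) ≤ f x + f y
  smul_eq : ∀ (c : ℝ) (x), f (c • x) = |c| * f x
  eq_zero_iff : ∀ x, f x = 0 ↔ x = 0
  smooth : ∀ x : Euc N, x ≠ 0 → ContDiffAt ℝ 1 f x
  sconv : StrictConvex ℝ {x : Euc N | f x ≤ 1}

/-- `f` is curved : the normalized-gradient map `h : {f = 1} → S^{N-1}`,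
`h(u) = ∇f(u)/‖∇f(u)‖₂`, is a bijection whose inverse is Lipschitz. -/
def Curved (f : Euc N → ℝ) : Prop :=
  ∃ (L : NNReal) (g : Euc N → Euc N),
    LipschitzOnWith L g (Metric.sphere (0 : Euc N) 1) ∧
    (∀ u : Euc N, f u = 1 → g (‖gradient f u‖⁻¹ • gradient f u) = u) ∧
    ∀ w ∈ Metric.sphere (0 : Euc N) 1, ∃ u, f u = 1 ∧ ‖gradient f u‖⁻¹ • gradient f u = w

/-- The projection `p` onto `Span(ψ_j : j ∈ J)` along the other basis vectors. -/
def pJ (ψ : Module.Basis (Fin N) ℝ (Euc N)) (J : Set (Fin N)) (x : Euc N) : Euc N :=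
  ∑ j : Fin N, if j ∈ J then ψ.repr x j • ψ j else 0

/-- The "center" `u^c` of the face of `u` : keep the saturated coordinates, zero out
the others. -/
def ucOf (ψ : Module.Basis (Fin N) ℝ (Euc N)) (τ : ℝ) (u : Euc N) : Euc N :=
  pJ ψ (Jset ψ τ u) u

/-- The equivalence class `ū` of `u` in `C(0)` : same active set. -/
def ubar (ψ : Module.Basis (Fin N) ℝ (Euc N)) (τ : ℝ) (u : Euc N) : Set (Euc N) :=
  {w ∈ cube0 ψ τ | Jset ψ τ w = Jset ψ τ u}

/-- The discrete grid `D = τ ℤ^N` (in the basis `ψ`). -/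
def Dgrid (ψ : Module.Basis (Fin N) ℝ (Euc N)) (τ : ℝ) : Set (Euc N) :=
  {x | ∃ k : Fin N → ℤ, x = ∑ i, (τ * (k i : ℝ)) • ψ i}

/-- The slice `Dom((k_j)_{j∈J})` of the grid : grid points whose `J`-coordinates are
the prescribed `τ k_j`. -/
def DomSlice (ψ : Module.Basis (Fin N) ℝ (Euc N)) (τ : ℝ) (J : Set (Fin N)) (k : Fin N → ℤ) :
    Set (Euc N) :=
  {x ∈ Dgrid ψ τ | ∀ j ∈ J, ψ.repr x j = τ * (k j : ℝ)}

/-- The grid `τ ℤ^J` inside `Span(ψ_j : j ∈ J)`. -/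
def JgridJ (ψ : Module.Basis (Fin N) ℝ (Euc N)) (τ : ℝ) (J : Set (Fin N)) : Set (Euc N) :=
  {x | ∃ k : Fin N → ℤ, x = ∑ j : Fin N, if j ∈ J then (τ * (k j : ℝ)) • ψ j else 0}

/-- `Leb_K(S)` : the Lebesgue measure (in `ℝ^{#J}`) of the set of `J`-indexed coordinate
families whose combination lies in `S`. -/
def lebJ (ψ : Module.Basis (Fin N) ℝ (Euc N)) (J : Set (Fin N)) (S : Set (Euc N)) : ENNReal :=
  volume {a : ↥J → ℝ | (∑ j : ↥J, a j • ψ (j : Fin N)) ∈ S}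

/-- The set `C_K` of centers of the faces of codimension `K`. -/
def CKset (ψ : Module.Basis (Fin N) ℝ (Euc N)) (τ : ℝ) (K : ℕ) : Set (Euc N) :=
  {x | ∃ (J : Set (Fin N)) (ε : Fin N → ℝ), J.ncard = K ∧ (∀ j ∈ J, ε j = 1 ∨ ε j = -1) ∧
    x = ∑ j : Fin N, if j ∈ J then (ε j * (τ / 2)) • ψ j else 0}

/-- The set `Cl_K` of boundary points of `C(0)` with exactly `K` active constraints. -/
def ClKset (ψ : Module.Basis (Fin N) ℝ (Euc N)) (τ : ℝ) (K : ℕ) : Set (Euc N) :=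
  {u | u ∈ frontier (cube0 ψ τ) ∧ (Jset ψ τ u).ncard = K}

/-- `k_i(u)` : the unique integer with `τ(k_i - 1/2) ≤ u_i < τ(k_i + 1/2)`. -/
def kfun (ψ : Module.Basis (Fin N) ℝ (Euc N)) (τ : ℝ) (u : Euc N) (i : Fin N) : ℤ :=
  ⌊ψ.repr u i / τ + 1 / 2⌋

/-- The grid point `τ Σ k_i(u) ψ_i` approximating `u`. -/
def gridpt (ψ : Module.Basis (Fin N) ℝ (Euc N)) (τ : ℝ) (u : Euc N) : Euc N :=
  ∑ i, (τ * (kfun ψ τ u i : ℝ)) • ψ i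

/-- `J̃(u)` : the active set of the solution of `(P)` at the grid point of `u`. -/
def Jtil (ψ : Module.Basis (Fin N) ℝ (Euc N)) (τ : ℝ) (sol : Euc N → Euc N) (u : Euc N) :
    Set (Fin N) :=
  Jset ψ τ (sol (gridpt ψ τ u))


/-! ### Auxiliary lemmas -/

section AuxStmt13

lemma mem_cube0_iff (ψ : Module.Basis (Fin N) ℝ (Euc N)) (τ : ℝ) (u : Euc N) :
    u ∈ cube0 ψ τ ↔ ∀ i, -(τ/2) ≤ ψ.repr u i ∧ ψ.repr u i ≤ τ/2 := by
  simp only [cube0, cube, Set.mem_setOf_eq, Pi.zero_apply, Int.cast_zero]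
  constructor
  · intro h i; obtain ⟨h1, h2⟩ := h i; constructor <;> nlinarith
  · intro h i; obtain ⟨h1, h2⟩ := h i; constructor <;> nlinarith

lemma repr_sum_ite (ψ : Module.Basis (Fin N) ℝ (Euc N)) (J : Set (Fin N)) (c : Fin N → ℝ) (i : Fin N) :
    ψ.repr (∑ j : Fin N, if j ∈ J then c j • ψ j else 0) i = if i ∈ J then c i else 0 := by
  rw [map_sum, Finsupp.finset_sum_apply]
  have h : ∀ j : Fin N, (ψ.repr (if j ∈ J then c j • ψ j else 0)) i
      = if j = i then (if j ∈ J then c j else 0) else 0 := by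
    intro j
    by_cases hj : j ∈ J
    · simp [hj, Module.Basis.repr_self, Finsupp.single_apply, mul_ite]
    · simp [hj]
  rw [Finset.sum_congr rfl fun j _ => h j, Finset.sum_ite_eq']
  simp

lemma cube0_convex (ψ : Module.Basis (Fin N) ℝ (Euc N)) (τ : ℝ) : Convex ℝ (cube0 ψ τ) := by
  intro x hx y hy a b ha hb hab
  rw [mem_cube0_iff] at *
  intro i
  obtain ⟨h1, h2⟩ := hx i; obtain ⟨h3, h4⟩ := hy i
  have : ψ.repr (a • x + b • y) i = a * ψ.repr x i + b * ψ.repr y i := by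
    simp [map_add, _root_.map_smul]
  rw [this]
  constructor <;> nlinarith

lemma GoodNorm.zero {f : Euc N → ℝ} (hf : GoodNorm f) : f 0 = 0 := (hf.eq_zero_iff 0).2 rfl

lemma GoodNorm.nonneg {f : Euc N → ℝ} (hf : GoodNorm f) (x : Euc N) : 0 ≤ f x := by
  have h1 : f (-x) = f x := by
    rw [← neg_one_smul ℝ x, hf.smul_eq]; norm_num
  have h2 : f (x + -x) ≤ f x + f (-x) := hf.add_le x (-x)
  rw [add_neg_cancel, hf.zero, h1] at h2
  linarith

lemma GoodNorm.interior_lt {f : Euc N → ℝ} (hf : GoodNorm f) {x : Euc N}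
    (hx : x ∈ interior {y : Euc N | f y ≤ 1}) : f x < 1 := by
  rcases lt_or_ge (f x) 1 with h | h
  · exact h
  exfalso
  have hx1 : x ∈ {y : Euc N | f y ≤ 1} := interior_subset hx
  rw [Set.mem_setOf_eq] at hx1
  have hfx : f x = 1 := le_antisymm hx1 h
  have hx0 : x ≠ 0 := by intro h0; rw [h0, hf.zero] at hfx; norm_num at hfx
  have hnx : 0 < ‖x‖ := norm_pos_iff.2 hx0
  rw [mem_interior_iff_mem_nhds, Metric.mem_nhds_iff] at hx
  obtain ⟨δ, hδ, hball⟩ := hx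
  set c : ℝ := 1 + δ / (2 * ‖x‖) with hc
  have hpos : 0 < δ / (2 * ‖x‖) := by positivity
  have hc1 : 1 < c := by rw [hc]; linarith
  have hmem : c • x ∈ Metric.ball x δ := by
    rw [Metric.mem_ball, dist_eq_norm]
    have : c • x - x = (c - 1) • x := by rw [sub_smul, one_smul]
    rw [this, norm_smul, Real.norm_eq_abs]
    have hceq : |c - 1| = δ / (2 * ‖x‖) := by
      rw [hc]; rw [add_sub_cancel_left, abs_of_pos hpos]
    rw [hceq]
    have hx2 : δ / (2 * ‖x‖) * ‖x‖ = δ / 2 := by field_simp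
    rw [hx2]
    linarith
  have hle : f (c • x) ≤ 1 := hball hmem
  rw [hf.smul_eq, hfx, abs_of_pos (by linarith : (0:ℝ) < c)] at hle
  linarith

lemma GoodNorm.strict_mid {f : Euc N → ℝ} (hf : GoodNorm f) {a b : Euc N} (hab : a ≠ b)
    {m : ℝ} (hm : 0 < m) (ha : f a = m) (hb : f b = m) :
    f ((1/2 : ℝ) • a + (1/2 : ℝ) • b) < m := by
  have hminv : |m⁻¹| = m⁻¹ := abs_of_pos (by positivity)
  have ha' : f (m⁻¹ • a) ≤ 1 := by rw [hf.smul_eq, hminv, ha, inv_mul_cancel₀ (ne_of_gt hm)]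
  have hb' : f (m⁻¹ • b) ≤ 1 := by rw [hf.smul_eq, hminv, hb, inv_mul_cancel₀ (ne_of_gt hm)]
  have hne : m⁻¹ • a ≠ m⁻¹ • b := by
    intro h
    exact hab (smul_right_injective _ (by positivity : m⁻¹ ≠ 0) h)
  have hint := hf.sconv ha' hb' hne (by norm_num : (0:ℝ) < 1/2) (by norm_num : (0:ℝ) < 1/2)
    (by norm_num)
  have hlt := hf.interior_lt hint
  have key : (1/2 : ℝ) • a + (1/2 : ℝ) • b
      = m • ((1/2 : ℝ) • m⁻¹ • a + (1/2 : ℝ) • m⁻¹ • b) := by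
    have hm' : m ≠ 0 := ne_of_gt hm
    rw [smul_add, smul_smul, smul_smul, smul_smul, smul_smul]
    congr 1 <;> congr 1 <;> field_simp
  rw [key, hf.smul_eq, abs_of_pos hm]
  calc m * f ((1/2 : ℝ) • m⁻¹ • a + (1/2 : ℝ) • m⁻¹ • b) < m * 1 :=
        (mul_lt_mul_iff_right₀ hm).2 hlt
    _ = m := mul_one m

lemma sol_unique (ψ : Module.Basis (Fin N) ℝ (Euc N)) {τ : ℝ} (f : Euc N → ℝ) (hf : GoodNorm f)
    {s : Euc N → Euc N} (hs : IsSol ψ τ f s) {u x : Euc N}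
    (hx : x ∈ cube0 ψ τ) (hmin : IsMinOn (fun v => f (v - u)) (cube0 ψ τ) x) : s u = x := by
  obtain ⟨hsu, hsmin⟩ := hs u
  by_contra hne
  have h1 : f (s u - u) ≤ f (x - u) := isMinOn_iff.mp hsmin x hx
  have h2 : f (x - u) ≤ f (s u - u) := isMinOn_iff.mp hmin (s u) hsu
  have hmeq : f (s u - u) = f (x - u) := le_antisymm h1 h2
  rcases eq_or_lt_of_le (hf.nonneg (x - u)) with h0 | h0
  · have hx0 : x - u = 0 := (hf.eq_zero_iff _).1 h0.symm
    have hs0 : s u - u = 0 := (hf.eq_zero_iff _).1 (by rw [hmeq, ← h0])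
    rw [sub_eq_zero] at hx0 hs0
    exact hne (by rw [hs0, hx0])
  · set z := (1/2:ℝ) • (s u) + (1/2:ℝ) • x with hz
    have hzmem : z ∈ cube0 ψ τ :=
      cube0_convex ψ τ hsu hx (by norm_num) (by norm_num) (by norm_num)
    have hzu : z - u = (1/2:ℝ) • (s u - u) + (1/2:ℝ) • (x - u) := by
      rw [hz]; module
    have hne' : s u - u ≠ x - u := fun h => hne (by rwa [sub_left_inj] at h)
    have hlt : f (z - u) < f (x - u) := by
      rw [hzu]
      exact hf.strict_mid hne' h0 hmeq rfl
    have := isMinOn_iff.mp hmin z hzmem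
    exact absurd this (not_le.2 hlt)

lemma min_scale (ψ : Module.Basis (Fin N) ℝ (Euc N)) {f : Euc N → ℝ} (hf : GoodNorm f)
    (J : Set (Fin N)) (ε : Fin N → ℝ) (hε : ∀ j ∈ J, ε j = 1 ∨ ε j = -1)
    (ucv : ℝ → Euc N)
    (huc : ∀ t : ℝ, ∀ i, ψ.repr (ucv t) i = if i ∈ J then ε i * (t/2) else 0)
    {t₁ t₂ : ℝ} (h1 : 0 < t₁) (h2 : 0 < t₂) (u : Euc N)
    (hmin : IsMinOn (fun v => f (v - u)) (cube0 ψ t₁) (ucv t₁)) :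
    IsMinOn (fun v => f (v - (u - ucv t₁ + ucv t₂))) (cube0 ψ t₂) (ucv t₂) := by
  set w : Euc N := u - ucv t₁ with hw
  rw [isMinOn_iff] at hmin ⊢
  intro v hv
  rw [mem_cube0_iff] at hv
  set lam : ℝ := min (t₁/t₂) 1 with hlam
  have hlam0 : 0 < lam := lt_min (by positivity) one_pos
  have hlam1 : lam ≤ 1 := min_le_right _ _
  have hlamt : lam * t₂ ≤ t₁ := by
    have hle := min_le_left (t₁/t₂) 1
    have := mul_le_mul_of_nonneg_right hle h2.le
    rwa [div_mul_cancel₀ _ (ne_of_gt h2)] at this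
  set d : Euc N := v - ucv t₂ with hd
  set v' : Euc N := ucv t₁ + lam • d with hv'
  have hv'mem : v' ∈ cube0 ψ t₁ := by
    rw [mem_cube0_iff]
    intro i
    have hrepr : ψ.repr v' i = (if i ∈ J then ε i * (t₁/2) else 0)
        + lam * (ψ.repr v i - (if i ∈ J then ε i * (t₂/2) else 0)) := by
      rw [hv', hd, map_add, _root_.map_smul, map_sub, Finsupp.add_apply, Finsupp.smul_apply,
        Finsupp.sub_apply, smul_eq_mul, huc, huc]
    obtain ⟨ha, hb⟩ := hv i
    rw [hrepr]
    have hint1 : 0 ≤ lam * (t₂/2 - ψ.repr v i) :=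
      mul_nonneg hlam0.le (by linarith)
    have hint2 : 0 ≤ lam * (ψ.repr v i + t₂/2) :=
      mul_nonneg hlam0.le (by linarith)
    by_cases hiJ : i ∈ J
    · simp only [if_pos hiJ]
      rcases hε i hiJ with he | he <;> rw [he] <;> constructor <;>
        linarith [hint1, hint2, hlamt, hlam0, hlam1]
    · simp only [if_neg hiJ]
      constructor <;> linarith [hint1, hint2, hlamt, hlam0, hlam1]
  have key : f (ucv t₁ - u) ≤ f (v' - u) := hmin v' hv'mem
  have e1 : ucv t₁ - u = -w := by rw [hw]; abel
  have e2 : v' - u = lam • d - w := by rw [hv', hw]; abel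
  rw [e1, e2] at key
  have hdecomp : lam • d - w = lam • (d - w) + (1 - lam) • (-w) := by module
  have hsub : f (lam • d - w) ≤ lam * f (d - w) + (1 - lam) * f (-w) := by
    rw [hdecomp]
    calc f (lam • (d - w) + (1 - lam) • (-w))
        ≤ f (lam • (d - w)) + f ((1 - lam) • (-w)) := hf.add_le _ _
      _ = lam * f (d - w) + (1 - lam) * f (-w) := by
          rw [hf.smul_eq, hf.smul_eq, abs_of_pos hlam0, abs_of_nonneg (by linarith)]
  have hfin : f (-w) ≤ f (d - w) := by nlinarith [key, hsub, hlam0]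
  show f (ucv t₂ - (u - ucv t₁ + ucv t₂)) ≤ f (v - (u - ucv t₁ + ucv t₂))
  have e3 : ucv t₂ - (u - ucv t₁ + ucv t₂) = -w := by rw [hw]; abel
  have e4 : v - (u - ucv t₁ + ucv t₂) = d - w := by rw [hd, hw]; abel
  rw [e3, e4]
  exact hfin

lemma pJ_formula (ψ : Module.Basis (Fin N) ℝ (Euc N)) (J : Set (Fin N)) (x : Euc N) :
    pJ ψ J x = ∑ j : Fin N, (if j ∈ J then ψ.repr x j else 0) • ψ j := by
  unfold pJ
  apply Finset.sum_congr rfl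
  intro j _
  by_cases h : j ∈ J <;> simp [h]

lemma pJ_sub_add (ψ : Module.Basis (Fin N) ℝ (Euc N)) (J : Set (Fin N)) (x a b : Euc N) :
    pJ ψ J (x - a + b) = pJ ψ J x - pJ ψ J a + pJ ψ J b := by
  simp only [pJ_formula, map_sub, map_add, Finsupp.sub_apply, Finsupp.add_apply]
  rw [← Finset.sum_sub_distrib, ← Finset.sum_add_distrib]
  apply Finset.sum_congr rfl
  intro j _
  by_cases h : j ∈ J <;> simp [h, sub_smul, add_smul]

end AuxStmt13

/-- for a fixed face (given by `J` and signs `ε`), the set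
`A(τ) = p(SSAT_τ({u^c(τ)},(0,τ'])) - u^c(τ)` does not depend on `τ`. -/
theorem stmt13 {N : ℕ} (hN : 1 ≤ N) (ψ : Module.Basis (Fin N) ℝ (Euc N))
    (f : Euc N → ℝ) (hf : GoodNorm f) (hcurved : Curved f)
    (fd : Euc N → ℝ) (hfd : IsNormLike fd)
    (sol : ℝ → Euc N → Euc N) (hsol : ∀ t : ℝ, 0 < t → IsSol ψ t f (sol t))
    (τ' : ℝ) (hτ' : 0 < τ')
    (J : Set (Fin N)) (hJ : J.Nonempty) (ε : Fin N → ℝ)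
    (hε : ∀ j ∈ J, ε j = 1 ∨ ε j = -1)
    (ucv : ℝ → Euc N)
    (hucv : ∀ t : ℝ, ucv t = ∑ j : Fin N, if j ∈ J then (ε j * (t / 2)) • ψ j else 0) :
    ∀ t₁ t₂ : ℝ, 0 < t₁ → 0 < t₂ →
      (fun x => x - ucv t₁) '' (pJ ψ J '' SSAT (sol t₁) fd {ucv t₁} (Set.Ioc 0 τ')) =
        (fun x => x - ucv t₂) '' (pJ ψ J '' SSAT (sol t₂) fd {ucv t₂} (Set.Ioc 0 τ')) := by
  have huc : ∀ t : ℝ, ∀ i, ψ.repr (ucv t) i = if i ∈ J then ε i * (t/2) else 0 := by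
    intro t i; rw [hucv t]; exact repr_sum_ite ψ J _ i
  have hucmem : ∀ t : ℝ, 0 < t → ucv t ∈ cube0 ψ t := by
    intro t ht
    rw [mem_cube0_iff]
    intro i
    rw [huc t i]
    by_cases hiJ : i ∈ J
    · rw [if_pos hiJ]
      rcases hε i hiJ with he | he <;> rw [he] <;> constructor <;> nlinarith
    · rw [if_neg hiJ]; constructor <;> linarith
  have hpJucv : ∀ t : ℝ, pJ ψ J (ucv t) = ucv t := by
    intro t
    rw [pJ_formula]
    conv_rhs => rw [hucv t]
    apply Finset.sum_congr rfl
    intro j _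
    by_cases h : j ∈ J <;> simp [h, huc t j]
  have hchar : ∀ t : ℝ, 0 < t → ∀ u : Euc N,
      u ∈ SSAT (sol t) fd {ucv t} (Set.Ioc 0 τ') ↔
      (IsMinOn (fun v => f (v - u)) (cube0 ψ t) (ucv t) ∧ fd (u - ucv t) ∈ Set.Ioc 0 τ') := by
    intro t ht u
    simp only [SSAT, Set.mem_setOf_eq, Set.mem_singleton_iff]
    constructor
    · rintro ⟨hs1, hs2⟩
      refine ⟨hs1 ▸ (hsol t ht u).2, ?_⟩
      rwa [hs1] at hs2
    · rintro ⟨hm, hfdm⟩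
      have heq := sol_unique ψ f hf (hsol t ht) (hucmem t ht) hm
      exact ⟨heq, by rwa [heq]⟩
  have hshift : ∀ ta tb : ℝ, 0 < ta → 0 < tb → ∀ u : Euc N,
      u ∈ SSAT (sol ta) fd {ucv ta} (Set.Ioc 0 τ') →
      (u - ucv ta + ucv tb) ∈ SSAT (sol tb) fd {ucv tb} (Set.Ioc 0 τ') := by
    intro ta tb hta htb u hu
    rw [hchar ta hta] at hu
    rw [hchar tb htb]
    obtain ⟨hm, hfdm⟩ := hu
    refine ⟨min_scale ψ hf J ε hε ucv huc hta htb u hm, ?_⟩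
    have : u - ucv ta + ucv tb - ucv tb = u - ucv ta := by abel
    rwa [this]
  intro t₁ t₂ ht₁ ht₂
  ext x
  simp only [Set.mem_image]
  constructor
  · rintro ⟨y, ⟨u, hu, rfl⟩, rfl⟩
    refine ⟨pJ ψ J (u - ucv t₁ + ucv t₂),
      ⟨u - ucv t₁ + ucv t₂, hshift t₁ t₂ ht₁ ht₂ u hu, rfl⟩, ?_⟩
    rw [pJ_sub_add, hpJucv t₁, hpJucv t₂]
    abel
  · rintro ⟨y, ⟨u, hu, rfl⟩, rfl⟩
    refine ⟨pJ ψ J (u - ucv t₂ + ucv t₁),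
      ⟨u - ucv t₂ + ucv t₁, hshift t₂ t₁ ht₂ ht₁ u hu, rfl⟩, ?_⟩
    rw [pJ_sub_add, hpJucv t₂, hpJucv t₁]
    abel
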